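/- Convolution theorem for the Hartley transform: for f, g ∈ L¹(ℝ), H(f # g)(t) = H(f)(t) · C(g)(t) for all t ∈ ℝ, where C(g)(t) = ∫_ℝ g(x) cos(xt) dx. -/

import Mathlib

open MeasureTheory Real Filter Topology

noncomputable def hash (f g : ℝ → ℝ) : ℝ → ℝ :=
  fun x => (1/2) * ∫ y, (f (x + y) + f (x - y)) * g y

noncomputable def hartley (f : ℝ → ℝ) : ℝ → ℝ :=
  fun t => (1 / Real.sqrt (2 * Real.pi)) * ∫ x, f x * (Real.cos (x * t) + Real.sin (x * t))

noncomputable def cosT (f : ℝ → ℝ) : ℝ → ℝ :=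
  fun t => ∫ x, f x * Real.cos (x * t)

noncomputable def fourierT (f : ℝ → ℝ) : ℝ → ℂ :=
  fun t => (1 / Real.sqrt (2 * Real.pi) : ℂ) * ∫ x, (f x : ℂ) * Complex.exp (-Complex.I * x * t)

lemma aux_int_add (f g : ℝ → ℝ) (hf : Integrable f) (hg : Integrable g) :
    Integrable (fun p : ℝ × ℝ => f (p.1 + p.2) * g p.2) (volume.prod volume) := by
  have h := (hf.mul_prod hg)
  exact ((measurePreserving_add_prod (volume : Measure ℝ) volume).integrable_comp
    h.aestronglyMeasurable).mpr h

lemma aux_int_sub (f g : ℝ → ℝ) (hf : Integrable f) (hg : Integrable g) :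
    Integrable (fun p : ℝ × ℝ => f (p.1 - p.2) * g p.2) (volume.prod volume) := by
  have h := (hf.mul_prod hg)
  exact ((measurePreserving_sub_prod (volume : Measure ℝ) volume).integrable_comp
    h.aestronglyMeasurable).mpr h

theorem stmt14 (f g : ℝ → ℝ) (hf : Integrable f) (hg : Integrable g) :
    ∀ t : ℝ, hartley (hash f g) t = hartley f t * cosT g t := by
  intro t
  set c : ℝ → ℝ := fun x => Real.cos (x * t) + Real.sin (x * t) with hc
  have hcont : Continuous c := by
    continuity
  have hcbd : ∀ x, ‖c x‖ ≤ 2 := by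
    intro x
    have h1 := abs_cos_le_one (x * t)
    have h2 := abs_sin_le_one (x * t)
    calc ‖c x‖ ≤ |Real.cos (x*t)| + |Real.sin (x*t)| := abs_add_le _ _
      _ ≤ 2 := by linarith
  -- integrability of products with c
  have hfc : Integrable (fun x => f x * c x) := by
    simpa [mul_comm] using hf.bdd_mul hcont.aestronglyMeasurable (c := 2) (Filter.Eventually.of_forall hcbd)
  -- double integrand
  have hF : Integrable (Function.uncurry fun x y => ((f (x + y) + f (x - y)) * g y) * c x)
      (volume.prod volume) := by
    have h1 := aux_int_add f g hf hg
    have h2 := aux_int_sub f g hf hg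
    have h3 : Integrable (fun p : ℝ × ℝ => (f (p.1 + p.2) + f (p.1 - p.2)) * g p.2)
        (volume.prod volume) := by
      simpa [add_mul] using h1.fun_add h2
    have := h3.bdd_mul ((hcont.comp continuous_fst).aestronglyMeasurable) (c := 2) (Filter.Eventually.of_forall fun p => hcbd p.1)
    simpa [mul_comm, Function.uncurry_def] using this
  -- unfold
  unfold hartley _root_.hash cosT
  -- swap integrals
  have hswap : (∫ x, (1/2 * ∫ y, (f (x + y) + f (x - y)) * g y) * c x)
      = (1/2) * ∫ y, ∫ x, ((f (x + y) + f (x - y)) * g y) * c x := by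
    have e : ∀ x, (1/2 * ∫ y, (f (x + y) + f (x - y)) * g y) * c x
        = 1/2 * ∫ y, ((f (x + y) + f (x - y)) * g y) * c x := by
      intro x
      rw [mul_assoc, ← integral_mul_const]
    calc (∫ x, (1/2 * ∫ y, (f (x + y) + f (x - y)) * g y) * c x)
        = ∫ x, 1/2 * ∫ y, ((f (x + y) + f (x - y)) * g y) * c x := by
          exact integral_congr_ae (Filter.Eventually.of_forall e)
      _ = 1/2 * ∫ x, ∫ y, ((f (x + y) + f (x - y)) * g y) * c x := integral_const_mul _ _
      _ = (1/2) * ∫ y, ∫ x, ((f (x + y) + f (x - y)) * g y) * c x := by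
          rw [integral_integral_swap hF]
  rw [show (∫ x, (1/2 * ∫ y, (f (x + y) + f (x - y)) * g y) * (Real.cos (x*t) + Real.sin (x*t)))
      = (∫ x, (1/2 * ∫ y, (f (x + y) + f (x - y)) * g y) * c x) from rfl, hswap]
  -- inner integral computation
  have hinner : ∀ y : ℝ, (∫ x, ((f (x + y) + f (x - y)) * g y) * c x)
      = g y * (2 * Real.cos (y * t)) * ∫ x, f x * c x := by
    intro y
    have e1 : (∫ x, f (x + y) * c x) = ∫ x, f x * c (x - y) := by
      have := integral_add_right_eq_self (μ := volume) (fun x => f x * c (x - y)) y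
      simpa using this
    have e2 : (∫ x, f (x - y) * c x) = ∫ x, f x * c (x + y) := by
      have := integral_sub_right_eq_self (μ := volume) (fun x => f x * c (x + y)) y
      simpa using this
    have i1 : Integrable (fun x => f (x + y) * c x) := by
      simpa [mul_comm] using (hf.comp_add_right y).bdd_mul hcont.aestronglyMeasurable (c := 2) (Filter.Eventually.of_forall hcbd)
    have i2 : Integrable (fun x => f (x - y) * c x) := by
      simpa [mul_comm] using (hf.comp_sub_right y).bdd_mul hcont.aestronglyMeasurable (c := 2) (Filter.Eventually.of_forall hcbd)
    have step : (∫ x, ((f (x + y) + f (x - y)) * g y) * c x)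
        = g y * ((∫ x, f (x + y) * c x) + ∫ x, f (x - y) * c x) := by
      rw [← integral_add i1 i2, ← integral_const_mul]
      congr 1; ext x; ring
    rw [step, e1, e2, ← integral_add]
    · have : (∫ x, (f x * c (x - y) + f x * c (x + y)))
          = ∫ x, (2 * Real.cos (y*t)) * (f x * c x) := by
        congr 1; ext x
        simp only [hc]
        rw [sub_mul, add_mul]
        rw [Real.cos_sub, Real.sin_sub, Real.cos_add, Real.sin_add]
        ring
      rw [this, integral_const_mul]
      ring
    · simpa [mul_comm] using hf.bdd_mul (hcont.comp (continuous_id.sub continuous_const)).aestronglyMeasurable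
        (c := 2) (Filter.Eventually.of_forall fun x => hcbd (x - y))
    · simpa [mul_comm] using hf.bdd_mul (hcont.comp (continuous_id.add continuous_const)).aestronglyMeasurable
        (c := 2) (Filter.Eventually.of_forall fun x => hcbd (x + y))
  rw [integral_congr_ae (Filter.Eventually.of_forall hinner)]
  have : (∫ y, g y * (2 * Real.cos (y * t)) * ∫ x, f x * c x)
      = (2 * ∫ x, f x * c x) * ∫ y, g y * Real.cos (y * t) := by
    rw [← integral_const_mul]
    congr 1; ext y; ring
  rw [this]
  simp only [hc]
  ring
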